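/- For integers n, k with 1 ≤ k ≤ n, the degenerate central factorial numbers of the second kind satisfy T_{2,λ}(n+1,k) = (k/2 - nλ)·T_{2,λ}(n,k) + T_{2,λ}(n,k-1|−1/2). -/

import Mathlib

open Real Filter Topology
open scoped ContDiff

noncomputable def T2 (lam x : ℝ) (n k : ℕ) : ℝ :=
  iteratedDeriv n (fun t : ℝ =>
    (k.factorial : ℝ)⁻¹ * (1 + lam * t) ^ (x / lam) *
      ((1 + lam * t) ^ (1 / (2 * lam)) - (1 + lam * t) ^ (-(1 / (2 * lam)))) ^ k) 0

namespace T2aux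

def U (lam : ℝ) : Set ℝ := {t | 0 < 1 + lam * t}

lemma isOpen_U (lam : ℝ) : IsOpen (U lam) :=
  isOpen_lt continuous_const (by fun_prop)

lemma zero_mem_U (lam : ℝ) : (0:ℝ) ∈ U lam := by simp [U]

lemma nhds_U (lam : ℝ) : U lam ∈ 𝓝 (0:ℝ) := (isOpen_U lam).mem_nhds (zero_mem_U lam)

lemma contDiffOn_affine_rpow (lam c : ℝ) :
    ContDiffOn ℝ ∞ (fun s : ℝ => (1 + lam * s) ^ c) (U lam) := by
  intro t ht
  exact ((Real.contDiffAt_rpow_const_of_ne (ne_of_gt ht)).comp t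
    ((contDiff_const.add (contDiff_const.mul contDiff_id)).contDiffAt)).contDiffWithinAt

/-- g -/
noncomputable def gg (lam t : ℝ) : ℝ :=
  (1 + lam * t) ^ (1 / (2 * lam)) - (1 + lam * t) ^ (-(1 / (2 * lam)))

lemma contDiffOn_gg (lam : ℝ) : ContDiffOn ℝ ∞ (gg lam) (U lam) :=
  (contDiffOn_affine_rpow lam _).sub (contDiffOn_affine_rpow lam _)

lemma hasDerivAt_affine_rpow (lam c : ℝ) {t : ℝ} (ht : t ∈ U lam) :
    HasDerivAt (fun s : ℝ => (1 + lam * s) ^ c) (c * (1 + lam * t) ^ (c - 1) * lam) t := by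
  have h1 : HasDerivAt (fun s : ℝ => 1 + lam * s) lam t := by
    simpa using ((hasDerivAt_id t).const_mul lam).const_add 1
  exact (Real.hasDerivAt_rpow_const (Or.inl (ne_of_gt ht))).comp t h1

lemma hasDerivAt_gg (lam : ℝ) (hlam : lam ≠ 0) {t : ℝ} (ht : t ∈ U lam) :
    HasDerivAt (gg lam)
      ((1/2) * ((1 + lam * t) ^ (1 / (2 * lam) - 1) + (1 + lam * t) ^ (-(1 / (2 * lam)) - 1))) t := by
  have h := (hasDerivAt_affine_rpow lam (1 / (2 * lam)) ht).sub
    (hasDerivAt_affine_rpow lam (-(1 / (2 * lam))) ht)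
  refine h.congr_deriv ?_
  field_simp
  ring

lemma contDiffOn_iteratedDeriv {v : ℝ → ℝ} {lam : ℝ} (hv : ContDiffOn ℝ ∞ v (U lam)) :
    ∀ n : ℕ, ContDiffOn ℝ ∞ (iteratedDeriv n v) (U lam) := by
  intro n
  induction n with
  | zero => simpa [iteratedDeriv_zero] using hv
  | succ m ih =>
      rw [iteratedDeriv_succ]
      exact ih.deriv_of_isOpen (isOpen_U lam) (by exact_mod_cast le_top)

lemma diffAt_iteratedDeriv {v : ℝ → ℝ} {lam : ℝ} (hv : ContDiffOn ℝ ∞ v (U lam))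
    (n : ℕ) {t : ℝ} (ht : t ∈ U lam) : DifferentiableAt ℝ (iteratedDeriv n v) t := by
  have := (contDiffOn_iteratedDeriv hv n).contDiffAt ((isOpen_U lam).mem_nhds ht)
  exact this.differentiableAt (by simp)

/-- linearity of iterated derivative on U -/
lemma itd_linear {f h : ℝ → ℝ} {lam : ℝ} (hf : ContDiffOn ℝ ∞ f (U lam))
    (hh : ContDiffOn ℝ ∞ h (U lam)) (c : ℝ) :
    ∀ n : ℕ, ∀ t ∈ U lam,
      iteratedDeriv n (fun s => c * f s + h s) t
        = c * iteratedDeriv n f t + iteratedDeriv n h t := by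
  intro n
  induction n with
  | zero => intro t ht; simp
  | succ m ih =>
      intro t ht
      have hev : iteratedDeriv m (fun s => c * f s + h s)
          =ᶠ[𝓝 t] fun s => c * iteratedDeriv m f s + iteratedDeriv m h s :=
        eventually_of_mem ((isOpen_U lam).mem_nhds ht) ih
      rw [iteratedDeriv_succ, hev.deriv_eq]
      have hA := diffAt_iteratedDeriv hf m ht
      have hB := diffAt_iteratedDeriv hh m ht
      rw [deriv_fun_add ((hA.const_mul c)) hB, deriv_const_mul c hA,
        ← iteratedDeriv_succ, ← iteratedDeriv_succ]

/-- Leibniz for affine factor -/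
lemma itd_affine_mul {v : ℝ → ℝ} {lam : ℝ} (hv : ContDiffOn ℝ ∞ v (U lam)) :
    ∀ n : ℕ, ∀ t ∈ U lam,
      iteratedDeriv n (fun s => (1 + lam * s) * v s) t
        = (1 + lam * t) * iteratedDeriv n v t + (n : ℝ) * lam * iteratedDeriv (n - 1) v t := by
  intro n
  induction n with
  | zero => intro t ht; simp
  | succ m ih =>
      intro t ht
      have hev : iteratedDeriv m (fun s => (1 + lam * s) * v s)
          =ᶠ[𝓝 t] fun s => (1 + lam * s) * iteratedDeriv m v s
              + (m : ℝ) * lam * iteratedDeriv (m - 1) v s :=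
        eventually_of_mem ((isOpen_U lam).mem_nhds ht) ih
      rw [iteratedDeriv_succ, hev.deriv_eq]
      have hA := diffAt_iteratedDeriv hv m ht
      have hB := diffAt_iteratedDeriv hv (m - 1) ht
      have haff : HasDerivAt (fun s : ℝ => 1 + lam * s) lam t := by
        simpa using ((hasDerivAt_id t).const_mul lam).const_add 1
      have hprod : HasDerivAt (fun s => (1 + lam * s) * iteratedDeriv m v s)
          (lam * iteratedDeriv m v t + (1 + lam * t) * iteratedDeriv (m + 1) v t) t := by
        have := haff.mul hA.hasDerivAt
        rw [← iteratedDeriv_succ] at this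
        exact this
      have htot : HasDerivAt (fun s => (1 + lam * s) * iteratedDeriv m v s
            + (m : ℝ) * lam * iteratedDeriv (m - 1) v s)
          (lam * iteratedDeriv m v t + (1 + lam * t) * iteratedDeriv (m + 1) v t
            + (m : ℝ) * lam * iteratedDeriv (m - 1 + 1) v t) t := by
        have hB' : HasDerivAt (iteratedDeriv (m - 1) v) (iteratedDeriv (m - 1 + 1) v t) t := by
          have := hB.hasDerivAt
          rwa [iteratedDeriv_succ]
        exact hprod.add (hB'.const_mul _)
      rw [htot.deriv]
      have hcase : (m : ℝ) * lam * iteratedDeriv (m - 1 + 1) v t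
          = (m : ℝ) * lam * iteratedDeriv m v t := by
        cases m with
        | zero => simp
        | succ p => simp
      rw [hcase]
      simp only [Nat.add_sub_cancel]
      push_cast
      ring

lemma ode (lam : ℝ) (hlam : lam ≠ 0) (m : ℕ) {t : ℝ} (ht : t ∈ U lam) :
    (1 + lam * t) * deriv (fun s => (((m+1).factorial : ℝ))⁻¹ * gg lam s ^ (m+1)) t
      = (((m : ℝ) + 1)/2) * ((((m+1).factorial : ℝ))⁻¹ * gg lam t ^ (m+1))
        + ((m.factorial : ℝ))⁻¹ * (1 + lam * t) ^ (-(1/(2*lam))) * gg lam t ^ m := by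
  have hg := hasDerivAt_gg lam hlam ht
  have hd : HasDerivAt (fun s => (((m+1).factorial : ℝ))⁻¹ * gg lam s ^ (m+1))
      ((((m+1).factorial : ℝ))⁻¹ * (((m:ℝ)+1) * gg lam t ^ m *
        ((1/2) * ((1 + lam * t) ^ (1 / (2 * lam) - 1)
          + (1 + lam * t) ^ (-(1 / (2 * lam)) - 1))))) t := by
    have := (hg.pow (m+1)).const_mul (((m+1).factorial : ℝ))⁻¹
    simpa [Nat.add_sub_cancel, mul_comm, mul_assoc, mul_left_comm] using this
  rw [hd.deriv]
  have ha : (0:ℝ) < 1 + lam * t := ht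
  have h1 : (1 + lam * t) ^ (1 / (2 * lam) - 1)
      = (1 + lam * t) ^ (1 / (2 * lam)) / (1 + lam * t) := by
    rw [Real.rpow_sub ha, Real.rpow_one]
  have h2 : (1 + lam * t) ^ (-(1 / (2 * lam)) - 1)
      = (1 + lam * t) ^ (-(1 / (2 * lam))) / (1 + lam * t) := by
    rw [Real.rpow_sub ha, Real.rpow_one]
  have hfac : (((m+1).factorial : ℝ)) = ((m:ℝ)+1) * (m.factorial : ℝ) := by
    rw [Nat.factorial_succ]; push_cast; ring
  have hfm : (m.factorial : ℝ) ≠ 0 := Nat.cast_ne_zero.2 m.factorial_ne_zero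
  have hm1 : ((m:ℝ)+1) ≠ 0 := by positivity
  rw [h1, h2, hfac, gg, pow_succ]
  field_simp
  ring

end T2aux

theorem T2_num_recurrence (lam : ℝ) (hlam : lam ≠ 0) (n k : ℕ) (hk : 1 ≤ k) (hkn : k ≤ n) :
    T2 lam 0 (n + 1) k
      = ((k : ℝ) / 2 - (n : ℝ) * lam) * T2 lam 0 n k
        + T2 lam (-(1 / 2)) n (k - 1) := by
  open T2aux in
  obtain ⟨m, rfl⟩ : ∃ m, k = m + 1 := ⟨k - 1, (Nat.succ_pred_eq_of_pos hk).symm⟩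
  set f : ℝ → ℝ := fun t => (((m+1).factorial : ℝ))⁻¹ * gg lam t ^ (m+1) with hfdef
  set h : ℝ → ℝ := fun t =>
    ((m.factorial : ℝ))⁻¹ * (1 + lam * t) ^ (-(1/(2*lam))) * gg lam t ^ m with hhdef
  have hT2f : ∀ N, T2 lam 0 N (m+1) = iteratedDeriv N f 0 := by
    intro N
    unfold T2
    congr 1
    funext t
    simp [hfdef, gg, zero_div, Real.rpow_zero]
  have hT2h : T2 lam (-(1/2)) n ((m+1) - 1) = iteratedDeriv n h 0 := by
    unfold T2
    congr 1
    funext t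
    have hx : (-(1/2):ℝ)/lam = -(1/(2*lam)) := by rw [neg_div, div_div]
    simp only [Nat.add_sub_cancel, hx]
    rfl
  have hfC : ContDiffOn ℝ ∞ f (U lam) :=
    contDiffOn_const.mul ((contDiffOn_gg lam).pow _)
  have hhC : ContDiffOn ℝ ∞ h (U lam) :=
    (contDiffOn_const.mul (contDiffOn_affine_rpow lam _)).mul ((contDiffOn_gg lam).pow _)
  have hvC : ContDiffOn ℝ ∞ (deriv f) (U lam) :=
    hfC.deriv_of_isOpen (isOpen_U lam) (by exact_mod_cast le_top)
  have key1 : iteratedDeriv n (fun s => (1 + lam * s) * deriv f s) 0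
      = iteratedDeriv (n+1) f 0 + (n : ℝ) * lam * iteratedDeriv n f 0 := by
    rw [itd_affine_mul hvC n 0 (zero_mem_U lam)]
    have hn1 : n - 1 + 1 = n := Nat.succ_pred_eq_of_pos (lt_of_lt_of_le hk hkn)
    rw [← iteratedDeriv_succ']
    have : iteratedDeriv (n-1) (deriv f) 0 = iteratedDeriv n f 0 := by
      rw [← iteratedDeriv_succ', hn1]
    rw [this]
    norm_num
  have key2 : iteratedDeriv n (fun s => (1 + lam * s) * deriv f s) 0
      = (((m:ℝ)+1)/2) * iteratedDeriv n f 0 + iteratedDeriv n h 0 := by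
    have hev : (fun s => (1 + lam * s) * deriv f s)
        =ᶠ[𝓝 (0:ℝ)] (fun s => (((m:ℝ)+1)/2) * f s + h s) :=
      eventually_of_mem (nhds_U lam) (fun t ht => ode lam hlam m ht)
    rw [hev.iteratedDeriv_eq n]
    exact itd_linear hfC hhC _ n 0 (zero_mem_U lam)
  rw [hT2f (n+1), hT2f n, hT2h]
  have := key1.symm.trans key2
  push_cast
  linarith
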